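/- Two unitary operator bases {U_j} and {V_k} of M_d(ℂ) are mutually unbiased if and only if the subspaces spanned by {|U_j⟩⟨U_j| − I/d²}_j and {|V_k⟩⟨V_k| − I/d²}_k in the space of traceless Hermitian operators are orthogonal, since ⟨⟨ϑ(U_j)|ϑ(V_k)⟩⟩ = |tr(U_j†V_k)|²/d² − 1/d². -/

import Mathlib

open Matrix
open scoped ComplexConjugate

/-- `ϑ(U) = |U⟩⟨U| − I/d²`, where `|U⟩ = (U ⊗ I)(1/√d)∑ₖ|k⟩⊗|k⟩`, so that
`(|U⟩⟨U|) (p, q) = (1/d) U p₁ p₂ · conj (U q₁ q₂)`. -/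
noncomputable def thet {d : ℕ} (U : Matrix (Fin d) (Fin d) ℂ) :
    Matrix (Fin d × Fin d) (Fin d × Fin d) ℂ :=
  (Matrix.of fun p q => ((d : ℂ))⁻¹ * U p.1 p.2 * conj (U q.1 q.2))
    - ((d : ℂ) ^ 2)⁻¹ • (1 : Matrix (Fin d × Fin d) (Fin d × Fin d) ℂ)

lemma thet_herm {d : ℕ} (U : Matrix (Fin d) (Fin d) ℂ) : (thet U)ᴴ = thet U := by
  ext p q
  simp [thet, Matrix.conjTranspose_apply, Matrix.one_apply, Prod.ext_iff, eq_comm,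
    _root_.map_mul, and_comm, apply_ite (starRingEnd ℂ), map_inv₀, map_pow, Complex.conj_natCast]
  ring

lemma key {d : ℕ} (hd : 0 < d) (U V : Matrix (Fin d) (Fin d) ℂ)
    (hU : (Uᴴ * U).trace = d) (hV : (Vᴴ * V).trace = d) :
    ((thet U)ᴴ * thet V).trace
      = (Uᴴ * V).trace * conj ((Uᴴ * V).trace) / (d : ℂ) ^ 2 - 1 / (d : ℂ) ^ 2 := by
  set AU : Matrix (Fin d × Fin d) (Fin d × Fin d) ℂ :=
    Matrix.of fun p q => ((d : ℂ))⁻¹ * U p.1 p.2 * conj (U q.1 q.2) with hAU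
  set AV : Matrix (Fin d × Fin d) (Fin d × Fin d) ℂ :=
    Matrix.of fun p q => ((d : ℂ))⁻¹ * V p.1 p.2 * conj (V q.1 q.2) with hAV
  set c : ℂ := ((d : ℂ) ^ 2)⁻¹ with hc
  have hdc : (d : ℂ) ≠ 0 := Nat.cast_ne_zero.mpr hd.ne'
  have hd2 : ((d : ℂ) ^ 2) ≠ 0 := pow_ne_zero 2 hdc
  have htrAU : AU.trace = 1 := by
    have : AU.trace = (d : ℂ)⁻¹ * (Uᴴ * U).trace := by
      simp only [Matrix.trace, Matrix.diag, hAU, Matrix.of_apply, Matrix.mul_apply,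
        Matrix.conjTranspose_apply, Finset.mul_sum, Fintype.sum_prod_type]
      rw [Finset.sum_comm]
      refine Finset.sum_congr rfl fun i _ => Finset.sum_congr rfl fun j _ => ?_
      simp only [RCLike.star_def]
      ring
    rw [this, hU, inv_mul_cancel₀ hdc]
  have htrAV : AV.trace = 1 := by
    have : AV.trace = (d : ℂ)⁻¹ * (Vᴴ * V).trace := by
      simp only [Matrix.trace, Matrix.diag, hAV, Matrix.of_apply, Matrix.mul_apply,
        Matrix.conjTranspose_apply, Finset.mul_sum, Fintype.sum_prod_type]
      rw [Finset.sum_comm]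
      refine Finset.sum_congr rfl fun i _ => Finset.sum_congr rfl fun j _ => ?_
      simp only [RCLike.star_def]
      ring
    rw [this, hV, inv_mul_cancel₀ hdc]
  have h1 : (Uᴴ * V).trace = ∑ p : Fin d × Fin d, conj (U p.1 p.2) * V p.1 p.2 := by
    rw [Fintype.sum_prod_type]
    simp only [Matrix.trace, Matrix.diag, Matrix.mul_apply, Matrix.conjTranspose_apply,
      RCLike.star_def]
    rw [Finset.sum_comm]
  have hcross : (AU * AV).trace
      = ((d : ℂ)⁻¹ * conj ((Uᴴ * V).trace)) * ((d : ℂ)⁻¹ * (Uᴴ * V).trace) := by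
    rw [h1, map_sum]
    simp only [_root_.map_mul, Complex.conj_conj, Finset.mul_sum, Finset.sum_mul]
    simp only [Matrix.trace, Matrix.diag, Matrix.mul_apply, hAU, hAV, Matrix.of_apply]
    rw [Finset.sum_comm]
    refine Finset.sum_congr rfl fun p _ => Finset.sum_congr rfl fun q _ => ?_
    ring
  have hexp : (thet U)ᴴ * thet V = AU * AV - c • AV - c • AU + (c * c) • 1 := by
    rw [thet_herm]
    show (AU - c • 1) * (AV - c • 1) = _
    simp only [Matrix.sub_mul, Matrix.mul_sub, Matrix.smul_mul, Matrix.mul_smul,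
      Matrix.one_mul, Matrix.mul_one, smul_smul]
    rw [smul_sub, smul_smul]
    abel
  rw [hexp]
  simp only [Matrix.trace_add, Matrix.trace_sub, Matrix.trace_smul, Matrix.trace_one,
    htrAU, htrAV, hcross, smul_eq_mul]
  have hcard : (Fintype.card (Fin d × Fin d) : ℂ) = (d : ℂ) ^ 2 := by
    simp [Fintype.card_prod]; ring
  rw [hcard, hc]
  have e1 : (d : ℂ)⁻¹ * (d : ℂ)⁻¹ = ((d : ℂ) ^ 2)⁻¹ := by rw [← mul_inv, sq]
  have e2 : ((d : ℂ) ^ 2)⁻¹ * ((d : ℂ) ^ 2) = 1 := inv_mul_cancel₀ hd2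
  field_simp
  ring_nf

/-- Two unitary operator bases `{U_j}` and `{V_k}` of `M_d(ℂ)` are mutually unbiased
if and only if the subspaces spanned by `{ϑ(U_j)}` and `{ϑ(V_k)}` are orthogonal,
since the Hilbert–Schmidt inner product satisfies
`⟨⟨ϑ(U_j)|ϑ(V_k)⟩⟩ = |tr(U_j†V_k)|²/d² − 1/d²`. -/
theorem mutually_unbiased_iff_orthogonal (d : ℕ) (hd : 0 < d)
    (U V : Fin (d ^ 2) → Matrix.unitaryGroup (Fin d) ℂ)
    (hU : ∀ j k, ((U j : Matrix (Fin d) (Fin d) ℂ)ᴴ * (U k : Matrix (Fin d) (Fin d) ℂ)).trace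
      = if j = k then (d : ℂ) else 0)
    (hV : ∀ j k, ((V j : Matrix (Fin d) (Fin d) ℂ)ᴴ * (V k : Matrix (Fin d) (Fin d) ℂ)).trace
      = if j = k then (d : ℂ) else 0) :
    (∀ j k, ((thet (U j : Matrix (Fin d) (Fin d) ℂ))ᴴ * thet (V k : Matrix (Fin d) (Fin d) ℂ)).trace
        = ((‖((U j : Matrix (Fin d) (Fin d) ℂ)ᴴ * (V k : Matrix (Fin d) (Fin d) ℂ)).trace‖ ^ 2
            / (d : ℝ) ^ 2 - 1 / (d : ℝ) ^ 2 : ℝ) : ℂ)) ∧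
    ((∀ j k, ‖((U j : Matrix (Fin d) (Fin d) ℂ)ᴴ * (V k : Matrix (Fin d) (Fin d) ℂ)).trace‖ ^ 2 = 1)
      ↔ ∀ j k, ((thet (U j : Matrix (Fin d) (Fin d) ℂ))ᴴ * thet (V k : Matrix (Fin d) (Fin d) ℂ)).trace = 0) := by
  have hdc : (d : ℂ) ≠ 0 := Nat.cast_ne_zero.mpr hd.ne'
  have hdr : ((d : ℝ) ^ 2) ≠ 0 := by positivity
  have main : ∀ j k, ((thet (U j : Matrix (Fin d) (Fin d) ℂ))ᴴ * thet (V k : Matrix (Fin d) (Fin d) ℂ)).trace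
      = ((‖((U j : Matrix (Fin d) (Fin d) ℂ)ᴴ * (V k : Matrix (Fin d) (Fin d) ℂ)).trace‖ ^ 2
          / (d : ℝ) ^ 2 - 1 / (d : ℝ) ^ 2 : ℝ) : ℂ) := by
    intro j k
    have hUu : ((U j : Matrix (Fin d) (Fin d) ℂ)ᴴ * (U j : Matrix (Fin d) (Fin d) ℂ)).trace = d := by
      simpa using hU j j
    have hVv : ((V k : Matrix (Fin d) (Fin d) ℂ)ᴴ * (V k : Matrix (Fin d) (Fin d) ℂ)).trace = d := by
      simpa using hV k k
    rw [key hd _ _ hUu hVv]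
    set t := ((U j : Matrix (Fin d) (Fin d) ℂ)ᴴ * (V k : Matrix (Fin d) (Fin d) ℂ)).trace with ht
    rw [Complex.mul_conj]
    push_cast [Complex.sq_norm]
    ring
  refine ⟨main, ?_⟩
  constructor
  · intro h j k
    rw [main j k, h j k]
    norm_num
  · intro h j k
    have h0 := (main j k).symm.trans (h j k)
    rw [Complex.ofReal_eq_zero, sub_eq_zero, div_eq_div_iff hdr hdr] at h0
    have := mul_right_cancel₀ hdr h0
    linarith
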